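/- Let P(x) = x^n + b_{n−1}x^{n−1} + ··· + b_0 be a real polynomial with Σ_{j=0}^{n−1} |b_j| ≤ 2. Suppose (u_j)_{j≤0} are reals with |u_j| ≤ 1 for all j ≤ 0. Then one can choose inductively, for each i ≥ 1, a sign a_i ∈ {−1, 1} and a real u_i ∈ [−1, 1] such that u_i = a_i − Σ_{k=0}^{n−1} b_k u_{i−n+k}. -/

import Mathlib

noncomputable def vA (n : ℕ) (b : ℕ → ℝ) (u : ℤ → ℝ) : ℕ → ℝ
  | 0 => u 0
  | m + 1 =>
      let S : ℝ := ∑ k ∈ (Finset.range n).attach,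
        b k.1 * (if _h : ((m : ℤ) + 1) - n + k.1 ≤ 0 then u (((m : ℤ) + 1) - n + k.1)
                 else vA n b u (((m : ℤ) + 1) - n + k.1).toNat)
      (if 0 ≤ S then 1 else -1) - S
decreasing_by
  have hk := k.2
  simp only [Finset.mem_range] at hk
  omega

noncomputable def vsel (n : ℕ) (b : ℕ → ℝ) (u : ℤ → ℝ) (i : ℤ) : ℝ :=
  if i ≤ 0 then u i else vA n b u i.toNat

lemma vsel_unfold (n : ℕ) (b : ℕ → ℝ) (u : ℤ → ℝ) (i : ℤ) (hi : 1 ≤ i) :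
    vsel n b u i =
      (if 0 ≤ ∑ k ∈ Finset.range n, b k * vsel n b u (i - n + k) then (1:ℝ) else -1)
        - ∑ k ∈ Finset.range n, b k * vsel n b u (i - n + k) := by
  obtain ⟨m, hm⟩ : ∃ m : ℕ, i = (m : ℤ) + 1 := ⟨(i - 1).toNat, by omega⟩
  subst hm
  have hv : vsel n b u ((m : ℤ) + 1) = vA n b u (m + 1) := by
    have : ((m : ℤ) + 1).toNat = m + 1 := by omega
    simp [vsel, this]
  rw [hv, vA]
  have hsum : (∑ k ∈ (Finset.range n).attach,
      b k.1 * (if _h : ((m : ℤ) + 1) - n + k.1 ≤ 0 then u (((m : ℤ) + 1) - n + k.1)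
               else vA n b u (((m : ℤ) + 1) - n + k.1).toNat))
      = ∑ k ∈ Finset.range n, b k * vsel n b u (((m : ℤ) + 1) - n + k) := by
    rw [← Finset.sum_attach (Finset.range n)
      (fun k => b k * vsel n b u (((m : ℤ) + 1) - n + k))]
    refine Finset.sum_congr rfl fun k _ => ?_
    by_cases h : ((m : ℤ) + 1) - n + k.1 ≤ 0
    · simp [vsel, h]
    · simp [vsel, h]
  rw [hsum]

lemma vsel_bound (n : ℕ) (b : ℕ → ℝ) (u : ℤ → ℝ)
    (hb : ∑ j ∈ Finset.range n, |b j| ≤ 2)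
    (hu : ∀ j : ℤ, j ≤ 0 → |u j| ≤ 1) (i : ℤ) : |vsel n b u i| ≤ 1 := by
  by_cases h0 : i ≤ 0
  · simpa [vsel, h0] using hu i h0
  · have hA : ∀ m : ℕ, |vA n b u m| ≤ 1 := by
      intro m
      induction m using Nat.strong_induction_on with
      | _ m ih =>
        match m with
        | 0 => simpa [vA] using hu 0 le_rfl
        | m + 1 =>
          rw [vA]
          set S : ℝ := ∑ k ∈ (Finset.range n).attach,
            b k.1 * (if _h : ((m : ℤ) + 1) - n + k.1 ≤ 0 then u (((m : ℤ) + 1) - n + k.1)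
                     else vA n b u (((m : ℤ) + 1) - n + k.1).toNat) with hS
          have hSb : |S| ≤ 2 := by
            calc |S| ≤ ∑ k ∈ (Finset.range n).attach,
                |b k.1 * (if _h : ((m : ℤ) + 1) - n + k.1 ≤ 0 then u (((m : ℤ) + 1) - n + k.1)
                     else vA n b u (((m : ℤ) + 1) - n + k.1).toNat)| :=
                  Finset.abs_sum_le_sum_abs _ _
              _ ≤ ∑ k ∈ (Finset.range n).attach, |b k.1| := by
                  refine Finset.sum_le_sum fun k _ => ?_
                  rw [abs_mul]
                  have hterm : |(if _h : ((m : ℤ) + 1) - n + k.1 ≤ 0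
                      then u (((m : ℤ) + 1) - n + k.1)
                      else vA n b u (((m : ℤ) + 1) - n + k.1).toNat)| ≤ 1 := by
                    by_cases h : ((m : ℤ) + 1) - n + k.1 ≤ 0
                    · simpa [h] using hu _ h
                    · have hk := k.2
                      simp only [Finset.mem_range] at hk
                      have hlt : (((m : ℤ) + 1) - n + k.1).toNat < m + 1 := by omega
                      simpa [h] using ih _ hlt
                  calc |b k.1| * _ ≤ |b k.1| * 1 :=
                        mul_le_mul_of_nonneg_left hterm (abs_nonneg _)
                    _ = |b k.1| := mul_one _
              _ = ∑ k ∈ Finset.range n, |b k| := Finset.sum_attach _ (fun j => |b j|)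
              _ ≤ 2 := hb
          rw [abs_le] at hSb ⊢
          by_cases hS0 : 0 ≤ S
          · rw [if_pos hS0]; constructor <;> linarith [hSb.1, hSb.2]
          · rw [if_neg hS0]; constructor <;> linarith [hSb.1, hSb.2]
    have : vsel n b u i = vA n b u i.toNat := by simp [vsel, h0]
    rw [this]; exact hA _

theorem digit_selection (n : ℕ) (b : ℕ → ℝ)
    (hb : ∑ j ∈ Finset.range n, |b j| ≤ 2)
    (u : ℤ → ℝ) (hu : ∀ j : ℤ, j ≤ 0 → |u j| ≤ 1) :
    ∃ a : ℤ → ℝ, ∃ v : ℤ → ℝ,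
      (∀ j : ℤ, j ≤ 0 → v j = u j) ∧
      ∀ i : ℤ, 1 ≤ i →
        (a i = -1 ∨ a i = 1) ∧ |v i| ≤ 1 ∧
        v i = a i - ∑ k ∈ Finset.range n, b k * v (i - n + k) := by
  refine ⟨fun i => if 0 ≤ ∑ k ∈ Finset.range n, b k * vsel n b u (i - n + k)
      then (1:ℝ) else -1, vsel n b u, fun j hj => by simp [vsel, hj], fun i hi => ?_⟩
  refine ⟨?_, vsel_bound n b u hb hu i, ?_⟩
  · by_cases h : 0 ≤ ∑ k ∈ Finset.range n, b k * vsel n b u (i - n + k) <;> simp [h]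
  · exact vsel_unfold n b u i hi
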